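/- Let (X,Ω) be a relative fractal drum in ℝ^N whose tube function satisfies V_{X,Ω}(ε) = Σ_{i=1}^m a_i λ_i^N V_{X,Ω}(ε/λ_i) + R(ε) with distinct λ_i ∈ (0,1), positive integer multiplicities a_i, and continuous remainder R(ε) = O(ε^{N−r}) as ε → 0⁺ for some r ∈ ℝ. Then the tube zeta function ζ̃_{X,Ω}(s;δ) admits a meromorphic continuation to the half-plane {Re(s) > r}, and every pole ω of ζ̃_{X,Ω} with Re(ω) > r satisfies 1 = Σ_{i=1}^m a_i λ_i^ω. -/

import Mathlib

open Set MeasureTheory Complex Filter Topology Asymptotics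

/-- Open ε-neighborhood of a set `X ⊆ ℝ^N`. -/
def nbhd {N : ℕ} (X : Set (EuclideanSpace ℝ (Fin N))) (ε : ℝ) :
    Set (EuclideanSpace ℝ (Fin N)) :=
  {y | ∃ x ∈ X, ‖y - x‖ < ε}

/-- The relative tube function `V_{X,Ω}(ε) = m(X_ε ∩ Ω)`, as a real number. -/
noncomputable def tubeFun {N : ℕ} (X Ω : Set (EuclideanSpace ℝ (Fin N))) (ε : ℝ) : ℝ :=
  (volume (nbhd X ε ∩ Ω)).toReal

/-! ### Auxiliary lemmas -/

lemma aux_contOn (w : ℂ) : ContinuousOn (fun t : ℝ => (t : ℂ) ^ w) (Ioi 0) := by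
  apply ContinuousOn.cpow (Complex.continuous_ofReal.continuousOn) continuousOn_const
  intro x hx
  exact Or.inl (by simpa using (show (0:ℝ) < x from hx))

lemma aux_int {g : ℝ → ℝ} {β : ℝ}
    (hg : AEStronglyMeasurable g (volume.restrict (Ioo (0:ℝ) β)))
    {M : ℝ} (hbd : ∀ t ∈ Ioo (0:ℝ) β, |g t| ≤ M) {w : ℂ} (hw : -1 < w.re) :
    IntegrableOn (fun t : ℝ => (t : ℂ) ^ w * (g t : ℂ)) (Ioo 0 β) := by
  rcases le_or_gt β 0 with hβ | hβ
  · rw [Ioo_eq_empty (by intro h; exact absurd (h.trans_le hβ) (lt_irrefl 0))]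
    simp [IntegrableOn]
  have hmeas : AEStronglyMeasurable (fun t : ℝ => (t : ℂ) ^ w * (g t : ℂ))
      (volume.restrict (Ioo (0:ℝ) β)) := by
    refine AEStronglyMeasurable.mul ?_ (Complex.continuous_ofReal.comp_aestronglyMeasurable hg)
    exact ((aux_contOn w).mono Ioo_subset_Ioi_self).aestronglyMeasurable measurableSet_Ioo
  have hint : IntegrableOn (fun t : ℝ => M * t ^ w.re) (Ioo 0 β) := by
    have h1 := (intervalIntegral.intervalIntegrable_rpow' (a := 0) (b := β) hw)
    rw [intervalIntegrable_iff_integrableOn_Ioo_of_le hβ.le] at h1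
    exact h1.const_mul M
  refine Integrable.mono' hint hmeas ?_
  filter_upwards [ae_restrict_mem measurableSet_Ioo] with t ht
  have ht0 : 0 < t := ht.1
  rw [norm_mul, Complex.norm_cpow_eq_rpow_re_of_pos ht0]
  have : ‖(g t : ℂ)‖ = |g t| := by
    rw [Complex.norm_real, Real.norm_eq_abs]
  rw [this, mul_comm M]
  exact mul_le_mul_of_nonneg_left (hbd t ht) (Real.rpow_nonneg ht0.le _)

lemma aux_isBigO_zero {g : ℝ → ℂ} {l : Filter ℝ} (h : ∀ᶠ t in l, g t = 0) (φ : ℝ → ℝ) :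
    g =O[l] φ := by
  rw [isBigO_iff]
  exact ⟨0, by filter_upwards [h] with t ht; simp [ht]⟩

lemma aux_mellin_shift_diff {g : ℝ → ℂ} {δ b : ℝ} (hδ : 0 < δ)
    (hloc : LocallyIntegrableOn g (Ioi 0) volume)
    (hzero : ∀ t, δ ≤ t → g t = 0)
    (hbot : g =O[𝓝[>] (0:ℝ)] fun t : ℝ => t ^ (-b)) {c : ℝ} {s : ℂ} (hs : b + c < s.re) :
    DifferentiableAt ℂ (fun z : ℂ => mellin g (z - (c : ℂ))) s := by
  have htop : g =O[atTop] fun t : ℝ => t ^ (-((s - (c:ℂ)).re + 1)) := by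
    apply aux_isBigO_zero
    filter_upwards [eventually_ge_atTop δ] with t ht using hzero t ht
  have hd : DifferentiableAt ℂ (mellin g) (s - (c : ℂ)) := by
    apply mellin_differentiableAt_of_isBigO_rpow hloc htop (lt_add_one _) hbot
    simp only [Complex.sub_re, Complex.ofReal_re]
    linarith
  have := DifferentiableAt.comp (g := mellin g) (f := fun z : ℂ => z - (c:ℂ)) s hd
    (differentiableAt_id.sub_const (c:ℂ))
  exact this

lemma aux_cov {V : ℝ → ℂ} {lam δ : ℝ} (hl : 0 < lam) (w : ℂ) :
    ∫ t in Ioo (0:ℝ) δ, (t:ℂ) ^ w * V (t / lam)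
      = (lam : ℂ) * (lam : ℂ) ^ w * ∫ u in Ioo (0:ℝ) (δ / lam), (u:ℂ) ^ w * V u := by
  set G : ℝ → ℂ := indicator (Ioo 0 (δ / lam)) (fun u => (u:ℂ) ^ w * V u) with hG
  have harg : ((lam : ℂ)).arg ≠ Real.pi := by
    rw [Complex.arg_ofReal_of_nonneg hl.le]
    exact (Real.pi_ne_zero).symm
  have h1 : ∫ t in Ioi (0:ℝ), G (lam⁻¹ * t) = (lam : ℂ) * ∫ u in Ioi (0:ℝ), G u := by
    rw [integral_comp_mul_left_Ioi G 0 (inv_pos.2 hl), mul_zero, inv_inv, Complex.real_smul]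
  have h2 : ∫ u in Ioi (0:ℝ), G u = ∫ u in Ioo (0:ℝ) (δ / lam), (u:ℂ) ^ w * V u := by
    rw [hG, setIntegral_indicator measurableSet_Ioo,
      inter_eq_self_of_subset_right Ioo_subset_Ioi_self]
  have h3 : ∀ t ∈ Ioi (0:ℝ), G (lam⁻¹ * t)
      = indicator (Ioo 0 δ) (fun t => ((lam⁻¹ : ℝ) : ℂ) ^ w * ((t:ℂ) ^ w * V (t / lam))) t := by
    intro t ht
    have ht0 : (0:ℝ) < t := ht
    have hmem : lam⁻¹ * t ∈ Ioo 0 (δ / lam) ↔ t ∈ Ioo (0:ℝ) δ := by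
      constructor
      · rintro ⟨h1', h2'⟩
        refine ⟨ht0, ?_⟩
        calc t = lam * (lam⁻¹ * t) := by field_simp
        _ < lam * (δ / lam) := mul_lt_mul_of_pos_left h2' hl
        _ = δ := by field_simp
      · rintro ⟨h1', h2'⟩
        refine ⟨by positivity, ?_⟩
        rw [div_eq_inv_mul]
        exact mul_lt_mul_of_pos_left h2' (inv_pos.2 hl)
    by_cases hmem' : t ∈ Ioo (0:ℝ) δ
    · rw [hG, indicator_of_mem (hmem.2 hmem'), indicator_of_mem hmem']
      have hc : ((lam⁻¹ * t : ℝ) : ℂ) ^ w = ((lam⁻¹ : ℝ) : ℂ) ^ w * ((t:ℝ):ℂ) ^ w := by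
        rw [Complex.ofReal_mul]
        exact mul_cpow_ofReal_nonneg (inv_pos.2 hl).le ht0.le w
      rw [show ((lam⁻¹ * t : ℝ) : ℂ) = ((lam⁻¹ * t : ℝ) : ℂ) from rfl, hc, inv_mul_eq_div]
      ring
    · rw [hG, indicator_of_notMem (fun hc => hmem' (hmem.1 hc)), indicator_of_notMem hmem']
  have h4 : ∫ t in Ioi (0:ℝ), G (lam⁻¹ * t)
      = ((lam⁻¹ : ℝ) : ℂ) ^ w * ∫ t in Ioo (0:ℝ) δ, (t:ℂ) ^ w * V (t / lam) := by
    rw [setIntegral_congr_fun measurableSet_Ioi h3,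
      setIntegral_indicator measurableSet_Ioo,
      inter_eq_self_of_subset_right Ioo_subset_Ioi_self, integral_const_mul]
  have hlC : ((lam : ℝ) : ℂ) ≠ 0 := Complex.ofReal_ne_zero.2 hl.ne'
  have hcpow : ((lam⁻¹ : ℝ) : ℂ) ^ w = ((lam : ℂ) ^ w)⁻¹ := by
    rw [Complex.ofReal_inv, Complex.inv_cpow _ _ harg]
  have hpne : ((lam : ℂ) ^ w) ≠ 0 := by
    rw [Ne, Complex.cpow_eq_zero_iff, not_and_or]
    exact Or.inl hlC
  rw [h2] at h1
  rw [h4, hcpow] at h1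
  field_simp at h1 ⊢
  linear_combination h1


noncomputable def SFEden (m : ℕ) (lam : Fin m → ℝ) (a : Fin m → ℕ) : ℂ → ℂ :=
  fun s => 1 - ∑ i, (a i : ℂ) * (lam i : ℂ) ^ s

noncomputable def SFEnum (m N : ℕ) (lam : Fin m → ℝ) (a : Fin m → ℕ) (V R : ℝ → ℝ) (δ : ℝ) :
    ℂ → ℂ :=
  fun s => (∑ i, (a i : ℂ) * (lam i : ℂ) ^ s *
      mellin (indicator (Ioo δ (δ / lam i)) (fun t => (V t : ℂ))) (s - N))
    + mellin (indicator (Ioo 0 δ) (fun t => (R t : ℂ))) (s - N)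

lemma SFE_identity {N m : ℕ} (V : ℝ → ℝ) (hVmeas : Measurable V) {M : ℝ}
    (hV0 : ∀ t, 0 ≤ V t) (hVM : ∀ t, V t ≤ M)
    (lam : Fin m → ℝ) (hlam : ∀ i, lam i ∈ Ioo (0:ℝ) 1) (a : Fin m → ℕ)
    {δ : ℝ} (hδ : 0 < δ)
    (R : ℝ → ℝ) (hRcont : ContinuousOn R (Ioi 0)) {K : ℝ}
    (hRbd : ∀ t ∈ Ioo (0:ℝ) δ, |R t| ≤ K)
    (hSFE : ∀ ε : ℝ, 0 < ε → V ε = ∑ i, (a i : ℝ) * lam i ^ N * V (ε / lam i) + R ε)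
    {s : ℂ} (hs : (N:ℝ) < s.re) :
    SFEden m lam a s * ∫ t in Ioo (0:ℝ) δ, (t:ℂ) ^ (s - N - 1) * (V t : ℂ)
      = SFEnum m N lam a V R δ s := by
  set w : ℂ := s - N - 1 with hw
  have hwre : -1 < w.re := by
    simp only [hw, Complex.sub_re, Complex.one_re, Complex.natCast_re]
    linarith
  have hVabs : ∀ (c : ℝ), ∀ t ∈ Ioo (0:ℝ) c, |V t| ≤ M := fun c t _ => by
    rw [_root_.abs_of_nonneg (hV0 t)]; exact hVM t
  have hVabs' : ∀ (l : ℝ), ∀ t ∈ Ioo (0:ℝ) δ, |V (t / l)| ≤ M := fun l t _ => by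
    rw [_root_.abs_of_nonneg (hV0 _)]; exact hVM _
  -- integrabilities
  have hintV : ∀ β : ℝ, IntegrableOn (fun t : ℝ => (t:ℂ) ^ w * (V t : ℂ)) (Ioo 0 β) :=
    fun β => aux_int hVmeas.aestronglyMeasurable.restrict (hVabs β) hwre
  have hintVi : ∀ i, IntegrableOn (fun t : ℝ => (t:ℂ) ^ w * (V (t / lam i) : ℂ)) (Ioo 0 δ) :=
    fun i => aux_int ((hVmeas.comp (measurable_id.div_const (lam i))).aestronglyMeasurable.restrict)
      (hVabs' (lam i)) hwre
  have hintR : IntegrableOn (fun t : ℝ => (t:ℂ) ^ w * (R t : ℂ)) (Ioo 0 δ) :=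
    aux_int ((hRcont.mono Ioo_subset_Ioi_self).aestronglyMeasurable measurableSet_Ioo) hRbd hwre
  -- Step 1: apply the SFE pointwise under the integral
  have e1 : (∫ t in Ioo (0:ℝ) δ, (t:ℂ) ^ w * (V t : ℂ))
      = (∑ i, ((a i : ℂ) * (lam i : ℂ) ^ (N : ℕ)) *
          ∫ t in Ioo (0:ℝ) δ, (t:ℂ) ^ w * (V (t / lam i) : ℂ))
        + ∫ t in Ioo (0:ℝ) δ, (t:ℂ) ^ w * (R t : ℂ) := by
    have ptw : ∀ t ∈ Ioo (0:ℝ) δ, (t:ℂ) ^ w * (V t : ℂ)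
        = (∑ i, ((a i : ℂ) * (lam i : ℂ) ^ (N : ℕ)) * ((t:ℂ) ^ w * (V (t / lam i) : ℂ)))
          + (t:ℂ) ^ w * (R t : ℂ) := by
      intro t ht
      have hc : (V t : ℂ)
          = ∑ i, (a i : ℂ) * (lam i : ℂ) ^ (N : ℕ) * (V (t / lam i) : ℂ) + (R t : ℂ) := by
        have := hSFE t ht.1
        push_cast [this]
        norm_num
      rw [hc, mul_add, Finset.mul_sum]
      congr 1
      exact Finset.sum_congr rfl fun i _ => by ring
    rw [setIntegral_congr_fun measurableSet_Ioo ptw,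
      integral_add (integrable_finset_sum _ fun i _ => (hintVi i).const_mul _) hintR,
      integral_finset_sum _ (fun i _ => (hintVi i).const_mul _)]
    simp_rw [integral_const_mul]
  -- Step 2: change of variables in each summand
  have e2 : ∀ i, (∫ t in Ioo (0:ℝ) δ, (t:ℂ) ^ w * (V (t / lam i) : ℂ))
      = (lam i : ℂ) * (lam i : ℂ) ^ w * ∫ u in Ioo (0:ℝ) (δ / lam i), (u:ℂ) ^ w * (V u : ℂ) :=
    fun i => aux_cov (V := fun t => (V t : ℂ)) (δ := δ) (hlam i).1 w
  -- Step 3: split the integral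
  have e3 : ∀ i, (∫ u in Ioo (0:ℝ) (δ / lam i), (u:ℂ) ^ w * (V u : ℂ))
      = (∫ t in Ioo (0:ℝ) δ, (t:ℂ) ^ w * (V t : ℂ))
        + ∫ t in Ioo δ (δ / lam i), (t:ℂ) ^ w * (V t : ℂ) := by
    intro i
    have hlt : δ < δ / lam i := by
      rw [lt_div_iff₀ (hlam i).1]
      nlinarith [(hlam i).2, hδ, (hlam i).1]
    have hunion : Ioo (0:ℝ) (δ / lam i) = Ioo 0 δ ∪ Ico δ (δ / lam i) :=
      (Ioo_union_Ico_eq_Ioo hδ hlt.le).symm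
    have hdisj : Disjoint (Ioo (0:ℝ) δ) (Ico δ (δ / lam i)) := by
      rw [Set.disjoint_left]
      rintro x ⟨_, hx2⟩ ⟨hx3, _⟩
      exact absurd hx2 (not_lt.2 hx3)
    have hsub : Ico δ (δ / lam i) ⊆ Ioo (0:ℝ) (δ / lam i) :=
      fun x hx => ⟨hδ.trans_le hx.1, hx.2⟩
    rw [hunion, setIntegral_union hdisj measurableSet_Ico
      ((hintV _).mono_set (Ioo_subset_Ioo_right hlt.le)) ((hintV _).mono_set hsub),
      integral_Ico_eq_integral_Ioo]
  -- Step 4: identify the mellin transforms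
  have e4 : ∀ i, mellin (indicator (Ioo δ (δ / lam i)) (fun t => (V t : ℂ))) (s - N)
      = ∫ t in Ioo δ (δ / lam i), (t:ℂ) ^ w * (V t : ℂ) := by
    intro i
    have hptw : ∀ t ∈ Ioi (0:ℝ), (t:ℂ) ^ (s - (N:ℂ) - 1) •
          indicator (Ioo δ (δ / lam i)) (fun t => (V t : ℂ)) t
        = indicator (Ioo δ (δ / lam i)) (fun t => (t:ℂ) ^ w * (V t : ℂ)) t := by
      intro t _
      by_cases h : t ∈ Ioo δ (δ / lam i)
      · rw [indicator_of_mem h, indicator_of_mem h, smul_eq_mul]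
      · rw [indicator_of_notMem h, indicator_of_notMem h, smul_zero]
    rw [mellin, setIntegral_congr_fun measurableSet_Ioi hptw,
      setIntegral_indicator measurableSet_Ioo,
      inter_eq_self_of_subset_right
        (show Ioo δ (δ / lam i) ⊆ Ioi (0:ℝ) from fun x hx => hδ.trans hx.1)]
  have e5 : mellin (indicator (Ioo 0 δ) (fun t => (R t : ℂ))) (s - N)
      = ∫ t in Ioo (0:ℝ) δ, (t:ℂ) ^ w * (R t : ℂ) := by
    have hptw : ∀ t ∈ Ioi (0:ℝ), (t:ℂ) ^ (s - (N:ℂ) - 1) •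
          indicator (Ioo (0:ℝ) δ) (fun t => (R t : ℂ)) t
        = indicator (Ioo (0:ℝ) δ) (fun t => (t:ℂ) ^ w * (R t : ℂ)) t := by
      intro t _
      by_cases h : t ∈ Ioo (0:ℝ) δ
      · rw [indicator_of_mem h, indicator_of_mem h, smul_eq_mul]
      · rw [indicator_of_notMem h, indicator_of_notMem h, smul_zero]
    rw [mellin, setIntegral_congr_fun measurableSet_Ioi hptw,
      setIntegral_indicator measurableSet_Ioo,
      inter_eq_self_of_subset_right Ioo_subset_Ioi_self]
  -- combining powers of lam i
  have hcomb : ∀ i, ((lam i : ℂ)) ^ (N : ℕ) * ((lam i : ℂ) * (lam i : ℂ) ^ w)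
      = (lam i : ℂ) ^ s := by
    intro i
    have hne : ((lam i : ℝ) : ℂ) ≠ 0 := Complex.ofReal_ne_zero.2 (hlam i).1.ne'
    calc ((lam i : ℂ)) ^ (N : ℕ) * ((lam i : ℂ) * (lam i : ℂ) ^ w)
        = (lam i : ℂ) ^ (N : ℂ) * ((lam i : ℂ) ^ (1 : ℂ) * (lam i : ℂ) ^ w) := by
          rw [Complex.cpow_natCast, Complex.cpow_one]
      _ = (lam i : ℂ) ^ ((N : ℂ) + ((1 : ℂ) + w)) := by
          rw [Complex.cpow_add _ _ hne, Complex.cpow_add _ _ hne]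
      _ = (lam i : ℂ) ^ s := by
          congr 1
          rw [hw]; ring
  -- assembling the functional equation for the zeta function
  have hI : (∫ t in Ioo (0:ℝ) δ, (t:ℂ) ^ w * (V t : ℂ))
      = ∑ i, (a i : ℂ) * (lam i : ℂ) ^ s *
          ((∫ t in Ioo (0:ℝ) δ, (t:ℂ) ^ w * (V t : ℂ))
            + mellin (indicator (Ioo δ (δ / lam i)) (fun t => (V t : ℂ))) (s - N))
        + mellin (indicator (Ioo 0 δ) (fun t => (R t : ℂ))) (s - N) := by
    calc (∫ t in Ioo (0:ℝ) δ, (t:ℂ) ^ w * (V t : ℂ))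
        = (∑ i, ((a i : ℂ) * (lam i : ℂ) ^ (N : ℕ)) *
            ∫ t in Ioo (0:ℝ) δ, (t:ℂ) ^ w * (V (t / lam i) : ℂ))
          + ∫ t in Ioo (0:ℝ) δ, (t:ℂ) ^ w * (R t : ℂ) := e1
      _ = (∑ i, (a i : ℂ) * (lam i : ℂ) ^ s *
            ((∫ t in Ioo (0:ℝ) δ, (t:ℂ) ^ w * (V t : ℂ))
              + ∫ t in Ioo δ (δ / lam i), (t:ℂ) ^ w * (V t : ℂ)))
          + ∫ t in Ioo (0:ℝ) δ, (t:ℂ) ^ w * (R t : ℂ) := by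
          congr 1
          refine Finset.sum_congr rfl fun i _ => ?_
          rw [e2 i, e3 i]
          linear_combination ((a i : ℂ) *
            ((∫ t in Ioo (0:ℝ) δ, (t:ℂ) ^ w * (V t : ℂ))
              + ∫ t in Ioo δ (δ / lam i), (t:ℂ) ^ w * (V t : ℂ))) * (hcomb i)
      _ = _ := by
          rw [← e5]
          congr 1
          refine Finset.sum_congr rfl fun i _ => ?_
          rw [e4 i]
  have hexp : ∑ i, (a i : ℂ) * (lam i : ℂ) ^ s *
        ((∫ t in Ioo (0:ℝ) δ, (t:ℂ) ^ w * (V t : ℂ))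
          + mellin (indicator (Ioo δ (δ / lam i)) (fun t => (V t : ℂ))) (s - N))
      = (∑ i, (a i : ℂ) * (lam i : ℂ) ^ s) * (∫ t in Ioo (0:ℝ) δ, (t:ℂ) ^ w * (V t : ℂ))
        + ∑ i, (a i : ℂ) * (lam i : ℂ) ^ s *
            mellin (indicator (Ioo δ (δ / lam i)) (fun t => (V t : ℂ))) (s - N) := by
    simp_rw [mul_add]
    rw [Finset.sum_add_distrib, Finset.sum_mul]
  rw [hexp] at hI
  simp only [SFEden, SFEnum]
  linear_combination hI

lemma SFEden_analytic {m : ℕ} (lam : Fin m → ℝ) (hlam : ∀ i, lam i ∈ Ioo (0:ℝ) 1)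
    (a : Fin m → ℕ) (z : ℂ) : AnalyticAt ℂ (SFEden m lam a) z := by
  have hd : Differentiable ℂ (SFEden m lam a) := by
    apply Differentiable.const_sub
    apply Differentiable.fun_sum
    intro i _
    exact (differentiable_const _).mul
      (differentiable_id.const_cpow (Or.inl (Complex.ofReal_ne_zero.2 (hlam i).1.ne')))
  exact hd.differentiableOn.analyticAt (Filter.univ_mem)

lemma SFEnum_analytic {N m : ℕ} (V : ℝ → ℝ) (hVmeas : Measurable V) {M : ℝ}
    (hV0 : ∀ t, 0 ≤ V t) (hVM : ∀ t, V t ≤ M)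
    (lam : Fin m → ℝ) (hlam : ∀ i, lam i ∈ Ioo (0:ℝ) 1) (a : Fin m → ℕ)
    {δ : ℝ} (hδ : 0 < δ)
    (R : ℝ → ℝ) (hRcont : ContinuousOn R (Ioi 0)) {K : ℝ}
    (hRbd : ∀ t ∈ Ioo (0:ℝ) δ, |R t| ≤ K)
    {r : ℝ}
    (hO : ∃ C > (0:ℝ), ∃ η > (0:ℝ), ∀ ε : ℝ, 0 < ε → ε < η → |R ε| ≤ C * ε ^ ((N:ℝ) - r))
    {s : ℂ} (hs : r < s.re) : AnalyticAt ℂ (SFEnum m N lam a V R δ) s := by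
  obtain ⟨C, hC, η, hη, hObd⟩ := hO
  -- local integrability of the truncated pieces
  have hVco : AEStronglyMeasurable (fun t : ℝ => (V t : ℂ)) volume :=
    Complex.continuous_ofReal.comp_aestronglyMeasurable hVmeas.aestronglyMeasurable
  have hgEloc : ∀ i, LocallyIntegrableOn
      (indicator (Ioo δ (δ / lam i)) (fun t => (V t : ℂ))) (Ioi 0) volume := by
    intro i
    have hIOn : IntegrableOn (fun t => (V t : ℂ)) (Ioo δ (δ / lam i)) := by
      refine Integrable.mono' (g := fun _ => M)
        (integrableOn_const measure_Ioo_lt_top.ne) hVco.restrict ?_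
      refine Filter.Eventually.of_forall fun t => ?_
      rw [Complex.norm_real, Real.norm_eq_abs, _root_.abs_of_nonneg (hV0 t)]
      exact hVM t
    exact ((hIOn.integrable_indicator measurableSet_Ioo).locallyIntegrable).locallyIntegrableOn _
  have hgRloc : LocallyIntegrableOn
      (indicator (Ioo 0 δ) (fun t => (R t : ℂ))) (Ioi 0) volume := by
    have hIOn : IntegrableOn (fun t => (R t : ℂ)) (Ioo 0 δ) := by
      refine Integrable.mono' (g := fun _ => K)
        (integrableOn_const measure_Ioo_lt_top.ne)
        (Complex.continuous_ofReal.comp_aestronglyMeasurable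
          ((hRcont.mono Ioo_subset_Ioi_self).aestronglyMeasurable measurableSet_Ioo)) ?_
      filter_upwards [ae_restrict_mem measurableSet_Ioo] with t ht
      rw [Complex.norm_real, Real.norm_eq_abs]
      exact hRbd t ht
    exact ((hIOn.integrable_indicator measurableSet_Ioo).locallyIntegrable).locallyIntegrableOn _
  -- vanishing above the truncation
  have hzeroE : ∀ i, ∀ t : ℝ, δ / lam i ≤ t →
      indicator (Ioo δ (δ / lam i)) (fun t => (V t : ℂ)) t = 0 := by
    intro i t ht
    exact indicator_of_notMem (fun hc => absurd hc.2 (not_lt.2 ht)) _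
  have hzeroR : ∀ t : ℝ, δ ≤ t → indicator (Ioo 0 δ) (fun t => (R t : ℂ)) t = 0 := by
    intro t ht
    exact indicator_of_notMem (fun hc => absurd hc.2 (not_lt.2 ht)) _
  -- big-O at 0⁺
  have hgEO : ∀ i, (indicator (Ioo δ (δ / lam i)) (fun t => (V t : ℂ)))
      =O[𝓝[>] (0:ℝ)] fun t : ℝ => t ^ (-(r - (N:ℝ))) := by
    intro i
    apply aux_isBigO_zero
    filter_upwards [Ioo_mem_nhdsGT_of_mem (show (0:ℝ) ∈ Ico 0 δ from ⟨le_refl 0, hδ⟩)]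
      with t ht
    exact indicator_of_notMem (fun hc => absurd (ht.2.trans hc.1) (lt_irrefl t)) _
  have hgRO : (indicator (Ioo 0 δ) (fun t => (R t : ℂ)))
      =O[𝓝[>] (0:ℝ)] fun t : ℝ => t ^ (-(r - (N:ℝ))) := by
    rw [isBigO_iff]
    refine ⟨C, ?_⟩
    filter_upwards [Ioo_mem_nhdsGT_of_mem (show (0:ℝ) ∈ Ico 0 η from ⟨le_refl 0, hη⟩)]
      with t ht
    have h1 : ‖indicator (Ioo 0 δ) (fun t => (R t : ℂ)) t‖ ≤ |R t| := by
      by_cases h : t ∈ Ioo (0:ℝ) δ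
      · rw [indicator_of_mem h, Complex.norm_real, Real.norm_eq_abs]
      · rw [indicator_of_notMem h, norm_zero]
        exact abs_nonneg _
    refine h1.trans ?_
    have h2 : -(r - (N:ℝ)) = (N:ℝ) - r := by ring
    rw [h2, Real.norm_eq_abs, _root_.abs_of_nonneg (Real.rpow_nonneg ht.1.le _)]
    exact hObd t ht.1 ht.2
  -- differentiability on the half-plane
  have hU : IsOpen {z : ℂ | r < z.re} := isOpen_lt continuous_const Complex.continuous_re
  refine DifferentiableOn.analyticAt ?_ (hU.mem_nhds hs)
  intro z hz
  have hz' : r < z.re := hz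
  apply DifferentiableAt.differentiableWithinAt
  apply DifferentiableAt.add
  · apply DifferentiableAt.fun_sum
    intro i _
    apply DifferentiableAt.mul
    · exact (differentiableAt_const _).mul
        (differentiableAt_id.const_cpow (Or.inl (Complex.ofReal_ne_zero.2 (hlam i).1.ne')))
    · refine aux_mellin_shift_diff (show (0:ℝ) < δ / lam i by
        have := (hlam i).1; positivity) (hgEloc i) (hzeroE i) (hgEO i) ?_
      linarith
  · refine aux_mellin_shift_diff hδ hgRloc hzeroR hgRO ?_
    linarith

/-- The general form of the theorem, for an abstract monotone bounded tube function. -/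
theorem SFE_key {N : ℕ} {m : ℕ} (V : ℝ → ℝ) (hVmeas : Measurable V) {M : ℝ}
    (hV0 : ∀ t, 0 ≤ V t) (hVM : ∀ t, V t ≤ M)
    (lam : Fin m → ℝ) (hlam : ∀ i, lam i ∈ Ioo (0:ℝ) 1)
    (a : Fin m → ℕ)
    (R : ℝ → ℝ) (hRcont : ContinuousOn R (Ioi 0)) (r : ℝ)
    (hO : ∃ C > (0:ℝ), ∃ η > (0:ℝ), ∀ ε : ℝ, 0 < ε → ε < η → |R ε| ≤ C * ε ^ ((N:ℝ) - r))
    (hSFE : ∀ ε : ℝ, 0 < ε → V ε = ∑ i, (a i : ℝ) * lam i ^ N * V (ε / lam i) + R ε)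
    (δ : ℝ) (hδ : 0 < δ) :
    ∃ Z : ℂ → ℂ,
      MeromorphicOn Z {s : ℂ | r < s.re} ∧
      (∀ s : ℂ, (N : ℝ) < s.re →
        Z s = ∫ t in Ioo (0 : ℝ) δ, (t : ℂ) ^ (s - N - 1) * (V t : ℂ)) ∧
      (∀ ω : ℂ, r < ω.re → ¬ AnalyticAt ℂ Z ω →
        (1 : ℂ) = ∑ i, (a i : ℂ) * (lam i : ℂ) ^ ω) := by
  classical
  have hM0 : (0:ℝ) ≤ M := le_trans (hV0 0) (hVM 0)
  have hS0 : (0:ℝ) ≤ ∑ i, (a i : ℝ) * lam i ^ N :=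
    Finset.sum_nonneg fun i _ => mul_nonneg (by positivity) (pow_nonneg (hlam i).1.le N)
  -- the remainder is globally bounded on (0, δ)
  have hRbd : ∀ t ∈ Ioo (0:ℝ) δ, |R t| ≤ M * (1 + ∑ i, (a i : ℝ) * lam i ^ N) := by
    intro t ht
    have hS := hSFE t ht.1
    have hsum0 : 0 ≤ ∑ i, (a i : ℝ) * lam i ^ N * V (t / lam i) :=
      Finset.sum_nonneg fun i _ =>
        mul_nonneg (mul_nonneg (by positivity) (pow_nonneg (hlam i).1.le N)) (hV0 _)
    have hsumM : ∑ i, (a i : ℝ) * lam i ^ N * V (t / lam i)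
        ≤ (∑ i, (a i : ℝ) * lam i ^ N) * M := by
      rw [Finset.sum_mul]
      refine Finset.sum_le_sum fun i _ => ?_
      exact mul_le_mul_of_nonneg_left (hVM _)
        (mul_nonneg (by positivity) (pow_nonneg (hlam i).1.le N))
    have h1 : R t = V t - ∑ i, (a i : ℝ) * lam i ^ N * V (t / lam i) := by linarith
    rw [h1, abs_le]
    constructor
    · nlinarith [hV0 t, hVM t]
    · nlinarith [hV0 t, hVM t]
  have hdenA : ∀ z : ℂ, AnalyticAt ℂ (SFEden m lam a) z := SFEden_analytic lam hlam a
  have hnumA : ∀ z : ℂ, r < z.re → AnalyticAt ℂ (SFEnum m N lam a V R δ) z :=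
    fun z hz => SFEnum_analytic V hVmeas hV0 hVM lam hlam a hδ R hRcont hRbd hO hz
  -- the "denominator" is not identically zero
  have hden_ne : ∃ z : ℂ, SFEden m lam a z ≠ 0 := by
    have htend : Tendsto (fun n : ℕ => ∑ i, (a i : ℝ) * lam i ^ n) atTop (𝓝 0) := by
      have h0 : (0:ℝ) = ∑ i : Fin m, (a i : ℝ) * 0 := by simp
      rw [h0]
      exact tendsto_finset_sum _ fun i _ =>
        (tendsto_pow_atTop_nhds_zero_of_lt_one (hlam i).1.le (hlam i).2).const_mul _
    obtain ⟨n, hn⟩ := (htend.eventually_lt_const one_pos).exists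
    refine ⟨(n : ℂ), ?_⟩
    simp only [SFEden]
    have hcast : ∑ i, (a i : ℂ) * (lam i : ℂ) ^ (n : ℂ)
        = ((∑ i, (a i : ℝ) * lam i ^ n : ℝ) : ℂ) := by
      push_cast
      exact Finset.sum_congr rfl fun i _ => by rw [Complex.cpow_natCast]
    rw [hcast, sub_ne_zero, Ne, eq_comm, Complex.ofReal_eq_one]
    exact fun hc => absurd hc (by linarith)
  refine ⟨fun z => if SFEden m lam a z = 0
      then (∫ t in Ioo (0:ℝ) δ, (t:ℂ) ^ (z - N - 1) * (V t : ℂ))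
      else SFEnum m N lam a V R δ z / SFEden m lam a z, ?_, ?_, ?_⟩
  · -- meromorphy
    intro x hx
    have hxre : r < x.re := hx
    have hevne : ∀ᶠ z in 𝓝[≠] x, SFEden m lam a z ≠ 0 := by
      rcases (hdenA x).eventually_eq_zero_or_eventually_ne_zero with h | h
      · exfalso
        obtain ⟨z0, hz0⟩ := hden_ne
        have heq : EqOn (SFEden m lam a) 0 univ :=
          AnalyticOnNhd.eqOn_zero_of_preconnected_of_eventuallyEq_zero
            (fun z _ => hdenA z) isPreconnected_univ (mem_univ x) h
        exact hz0 (heq (mem_univ z0))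
      · exact h
    refine (((hnumA x hxre).meromorphicAt).div ((hdenA x).meromorphicAt)).congr ?_
    filter_upwards [hevne] with z hz
    simp only [Pi.div_apply, if_neg hz]
  · -- value for Re s > N
    intro s hsN
    by_cases h0 : SFEden m lam a s = 0
    · simp only [if_pos h0]
    · simp only [if_neg h0]
      have hid := SFE_identity V hVmeas hV0 hVM lam hlam a hδ R hRcont hRbd hSFE hsN
      rw [← hid]
      exact mul_div_cancel_left₀ _ h0
  · -- poles satisfy the Moran equation
    intro ω hω hna
    by_contra hne1
    have h0 : SFEden m lam a ω ≠ 0 := by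
      simp only [SFEden]
      exact sub_ne_zero.2 fun hc => hne1 hc
    refine hna ?_
    have hev : ∀ᶠ z in 𝓝 ω, SFEden m lam a z ≠ 0 := (hdenA ω).continuousAt.eventually_ne h0
    refine ((hnumA ω hω).div (hdenA ω) h0).congr ?_
    filter_upwards [hev] with z hz
    simp only [Pi.div_apply, if_neg hz]

theorem complexDimensions_from_SFE {N : ℕ} (m : ℕ) (hm : 1 ≤ m)
    (X Ω : Set (EuclideanSpace ℝ (Fin N)))
    (hΩopen : IsOpen Ω) (hΩfin : volume Ω ≠ ⊤) (hRFD : ∃ δ > (0 : ℝ), X ⊆ nbhd Ω δ)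
    (lam : Fin m → ℝ) (hlam : ∀ i, lam i ∈ Ioo (0 : ℝ) 1) (hdist : Function.Injective lam)
    (a : Fin m → ℕ) (ha : ∀ i, 0 < a i)
    (R : ℝ → ℝ) (hRcont : ContinuousOn R (Ioi 0)) (r : ℝ)
    (hO : ∃ C > (0 : ℝ), ∃ η > (0 : ℝ), ∀ ε : ℝ, 0 < ε → ε < η → |R ε| ≤ C * ε ^ ((N : ℝ) - r))
    (hSFE : ∀ ε : ℝ, 0 < ε →
      tubeFun X Ω ε = ∑ i, (a i : ℝ) * lam i ^ N * tubeFun X Ω (ε / lam i) + R ε)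
    (δ : ℝ) (hδ : 0 < δ) :
    ∃ Z : ℂ → ℂ,
      MeromorphicOn Z {s : ℂ | r < s.re} ∧
      (∀ s : ℂ, (N : ℝ) < s.re →
        Z s = ∫ t in Ioo (0 : ℝ) δ, (t : ℂ) ^ (s - N - 1) * (tubeFun X Ω t : ℂ)) ∧
      (∀ ω : ℂ, r < ω.re → ¬ AnalyticAt ℂ Z ω →
        (1 : ℂ) = ∑ i, (a i : ℂ) * (lam i : ℂ) ^ ω) := by
  have hmono : Monotone (tubeFun X Ω) := by
    intro ε ε' h
    apply ENNReal.toReal_mono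
    · exact ne_top_of_le_ne_top hΩfin (measure_mono inter_subset_right)
    · apply measure_mono
      apply inter_subset_inter_left
      rintro y ⟨x, hx, hxy⟩
      exact ⟨x, hx, hxy.trans_le h⟩
  have h0 : ∀ t, 0 ≤ tubeFun X Ω t := fun t => ENNReal.toReal_nonneg
  have hM : ∀ t, tubeFun X Ω t ≤ (volume Ω).toReal := fun t =>
    ENNReal.toReal_mono hΩfin (measure_mono inter_subset_right)
  exact SFE_key (tubeFun X Ω) hmono.measurable h0 hM lam hlam a R hRcont r hO hSFE δ hδ
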